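/- Let a < b, let P ∈ ℝ^{p×m}, let Q₁ : [a,b] → ℝ^{p×n}, Q₂ : [a,b] → ℝ^{q×m} be continuous, and let R₀ : [a,b] → ℝ^{q×n}, R₁, R₂ : [a,b]² → ℝ^{q×n} be continuous. Then for all (x₁, y₁) ∈ ℝ^m × L²([a,b], ℝ^n) and (x₂, y₂) ∈ ℝ^p × L²([a,b], ℝ^q), ⟨Π[P,Q₁,Q₂,R₀,R₁,R₂](x₁,y₁), (x₂,y₂)⟩ = ⟨(x₁,y₁), Π[P̂,Q̂₁,Q̂₂,R̂₀,R̂₁,R̂₂](x₂,y₂)⟩, where P̂ = Pᵀ, Q̂₁(s) = Q₂(s)ᵀ, Q̂₂(s) = Q₁(s)ᵀ, R̂₀(s) = R₀(s)ᵀ, R̂₁(s,η) = R₂(η,s)ᵀ and R̂₂(s,η) = R₁(η,s)ᵀ. That is, the adjoint of a 4-PI operator with respect to the ℝ × L² inner product is again a 4-PI operator with these parameters. -/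

import Mathlib

open MeasureTheory Set Matrix
open scoped RealInnerProductSpace

/-- Matrix–vector multiplication, viewed as a map between Euclidean spaces. -/
def mulVecE {n m : ℕ} (M : Matrix (Fin n) (Fin m) ℝ) (v : EuclideanSpace ℝ (Fin m)) :
    EuclideanSpace ℝ (Fin n) := WithLp.toLp 2 (M.mulVec v)

/-- The 3-PI operator `P_{N₀,N₁,N₂}`, applied pointwise. -/
noncomputable def threePI {n m : ℕ} (a b : ℝ)
    (N₀ : ℝ → Matrix (Fin n) (Fin m) ℝ)
    (N₁ N₂ : ℝ → ℝ → Matrix (Fin n) (Fin m) ℝ)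
    (y : ℝ → EuclideanSpace ℝ (Fin m)) (s : ℝ) : EuclideanSpace ℝ (Fin n) :=
  mulVecE (N₀ s) (y s) + (∫ θ in a..s, mulVecE (N₁ s θ) (y θ))
    + ∫ θ in s..b, mulVecE (N₂ s θ) (y θ)

/-- Finite-dimensional component of the 4-PI operator `Π[P,Q₁,Q₂,R₀,R₁,R₂]`:
`P x + ∫_a^b Q₁(s) y(s) ds`. -/
noncomputable def fourPIfin {p n m : ℕ} (a b : ℝ)
    (P : Matrix (Fin p) (Fin m) ℝ) (Q₁ : ℝ → Matrix (Fin p) (Fin n) ℝ)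
    (x : EuclideanSpace ℝ (Fin m)) (y : ℝ → EuclideanSpace ℝ (Fin n)) :
    EuclideanSpace ℝ (Fin p) :=
  mulVecE P x + ∫ s in a..b, mulVecE (Q₁ s) (y s)

/-- Function-valued component of the 4-PI operator `Π[P,Q₁,Q₂,R₀,R₁,R₂]`:
`s ↦ Q₂(s) x + (P_{R₀,R₁,R₂} y)(s)`. -/
noncomputable def fourPIfun {q n m : ℕ} (a b : ℝ)
    (Q₂ : ℝ → Matrix (Fin q) (Fin m) ℝ)
    (R₀ : ℝ → Matrix (Fin q) (Fin n) ℝ) (R₁ R₂ : ℝ → ℝ → Matrix (Fin q) (Fin n) ℝ)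
    (x : EuclideanSpace ℝ (Fin m)) (y : ℝ → EuclideanSpace ℝ (Fin n)) (s : ℝ) :
    EuclideanSpace ℝ (Fin q) :=
  mulVecE (Q₂ s) x + threePI a b R₀ R₁ R₂ y s

/-- entrywise ℓ¹ "norm" of a matrix -/
def matN {n m : ℕ} (M : Matrix (Fin n) (Fin m) ℝ) : ℝ := ∑ i, ∑ j, |M i j|

lemma matN_nonneg {n m : ℕ} (M : Matrix (Fin n) (Fin m) ℝ) : 0 ≤ matN M :=
  Finset.sum_nonneg fun _ _ => Finset.sum_nonneg fun _ _ => abs_nonneg _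

lemma continuous_matN {n m : ℕ} : Continuous (matN (n := n) (m := m)) := by
  unfold matN
  exact continuous_finset_sum _ fun i _ => continuous_finset_sum _ fun j _ =>
    ((continuous_apply j).comp (continuous_apply i)).abs

lemma eucl_abs_le_norm {n : ℕ} (v : EuclideanSpace ℝ (Fin n)) (i : Fin n) : |v i| ≤ ‖v‖ := by
  rw [EuclideanSpace.norm_eq, ← Real.sqrt_sq_eq_abs]
  apply Real.sqrt_le_sqrt
  simpa using Finset.single_le_sum (f := fun j => v j ^ 2) (fun j _ => sq_nonneg _)
    (Finset.mem_univ i)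

lemma eucl_norm_le_sum {n : ℕ} (v : EuclideanSpace ℝ (Fin n)) : ‖v‖ ≤ ∑ i, |v i| := by
  rw [EuclideanSpace.norm_eq]
  simp only [Real.norm_eq_abs]
  have h : ∑ i, |v i| ^ 2 ≤ (∑ i, |v i|) ^ 2 :=
    Finset.sum_sq_le_sq_sum_of_nonneg fun i _ => abs_nonneg _
  calc Real.sqrt (∑ i, |v i| ^ 2) ≤ Real.sqrt ((∑ i, |v i|) ^ 2) := Real.sqrt_le_sqrt h
  _ = ∑ i, |v i| := by
      rw [Real.sqrt_sq (Finset.sum_nonneg fun i _ => abs_nonneg _)]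

lemma norm_mulVecE_le {n m : ℕ} (M : Matrix (Fin n) (Fin m) ℝ) (v : EuclideanSpace ℝ (Fin m)) :
    ‖mulVecE M v‖ ≤ matN M * ‖v‖ := by
  calc ‖mulVecE M v‖ ≤ ∑ i, |mulVecE M v i| := eucl_norm_le_sum _
  _ ≤ ∑ i, (∑ j, |M i j|) * ‖v‖ := by
      apply Finset.sum_le_sum
      intro i _
      calc |mulVecE M v i| = |∑ j, M i j * v j| := rfl
      _ ≤ ∑ j, |M i j * v j| := Finset.abs_sum_le_sum_abs _ _
      _ ≤ ∑ j, |M i j| * ‖v‖ := by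
          apply Finset.sum_le_sum
          intro j _
          rw [abs_mul]
          exact mul_le_mul_of_nonneg_left (eucl_abs_le_norm v j) (abs_nonneg _)
      _ = (∑ j, |M i j|) * ‖v‖ := by rw [Finset.sum_mul]
  _ = matN M * ‖v‖ := by rw [matN, Finset.sum_mul]

lemma continuous_mulVecE {n m : ℕ} :
    Continuous (fun p : Matrix (Fin n) (Fin m) ℝ × EuclideanSpace ℝ (Fin m) =>
      mulVecE p.1 p.2) := by
  unfold mulVecE
  refine Continuous.comp (PiLp.continuous_toLp ..) ?_
  apply continuous_pi
  intro i
  unfold Matrix.mulVec dotProduct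
  exact continuous_finset_sum _ fun j _ =>
    (((continuous_apply j).comp ((continuous_apply i).comp continuous_fst))).mul
      ((continuous_apply j).comp ((PiLp.continuous_ofLp ..).comp continuous_snd))

lemma inner_mulVecE {n m : ℕ} (M : Matrix (Fin n) (Fin m) ℝ) (v : EuclideanSpace ℝ (Fin m))
    (w : EuclideanSpace ℝ (Fin n)) : ⟪mulVecE M v, w⟫ = ⟪v, mulVecE Mᵀ w⟫ := by
  simp only [PiLp.inner_apply, RCLike.inner_apply, conj_trivial, mulVecE, Matrix.mulVec,
    dotProduct, Matrix.transpose_apply, Finset.sum_mul, Finset.mul_sum]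
  rw [Finset.sum_comm]
  congr 1; ext i; congr 1; ext j; ring

lemma exists_matN_bound {α : Type*} [TopologicalSpace α] {q n : ℕ} {t : Set α}
    (htc : IsCompact t) {A : α → Matrix (Fin q) (Fin n) ℝ} (hA : ContinuousOn A t) :
    ∃ C : ℝ, 0 ≤ C ∧ ∀ s ∈ t, matN (A s) ≤ C := by
  rcases t.eq_empty_or_nonempty with h | h
  · exact ⟨0, le_refl 0, by simp [h]⟩
  obtain ⟨z, hz, hmax⟩ := htc.exists_isMaxOn h (continuous_matN.comp_continuousOn hA)
  exact ⟨matN (A z), matN_nonneg _, hmax⟩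

instance matrixPseudoMetrizable {q n : ℕ} :
    TopologicalSpace.PseudoMetrizableSpace (Matrix (Fin q) (Fin n) ℝ) :=
  inferInstanceAs (TopologicalSpace.PseudoMetrizableSpace (Fin q → Fin n → ℝ))

lemma aesm_mulVecE {q n : ℕ} {t : Set ℝ} (ht : MeasurableSet t)
    {A : ℝ → Matrix (Fin q) (Fin n) ℝ} (hA : ContinuousOn A t)
    {y : ℝ → EuclideanSpace ℝ (Fin n)} (hy : AEStronglyMeasurable y (volume.restrict t)) :
    AEStronglyMeasurable (fun s => mulVecE (A s) (y s)) (volume.restrict t) := by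
  have hp : AEStronglyMeasurable (fun s => (A s, y s)) (volume.restrict t) :=
    (hA.aestronglyMeasurable ht).prodMk hy
  exact continuous_mulVecE.comp_aestronglyMeasurable hp

lemma integrable_mulVecE {q n : ℕ} {t : Set ℝ} (ht : MeasurableSet t) (htc : IsCompact t)
    {A : ℝ → Matrix (Fin q) (Fin n) ℝ} (hA : ContinuousOn A t)
    {y : ℝ → EuclideanSpace ℝ (Fin n)} (hy : Integrable y (volume.restrict t)) :
    Integrable (fun s => mulVecE (A s) (y s)) (volume.restrict t) := by
  obtain ⟨C, -, hC⟩ := exists_matN_bound htc hA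
  refine (hy.norm.const_mul C).mono' (aesm_mulVecE ht hA hy.aestronglyMeasurable) ?_
  filter_upwards [ae_restrict_mem ht] with s hs
  calc ‖mulVecE (A s) (y s)‖ ≤ matN (A s) * ‖y s‖ := norm_mulVecE_le _ _
  _ ≤ C * ‖y s‖ := mul_le_mul_of_nonneg_right (hC s hs) (norm_nonneg _)

lemma memL2_mulVecE {q n : ℕ} {t : Set ℝ} (ht : MeasurableSet t) (htc : IsCompact t)
    {A : ℝ → Matrix (Fin q) (Fin n) ℝ} (hA : ContinuousOn A t)
    {y : ℝ → EuclideanSpace ℝ (Fin n)} (hy : MemLp y 2 (volume.restrict t)) :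
    MemLp (fun s => mulVecE (A s) (y s)) 2 (volume.restrict t) := by
  obtain ⟨C, -, hC⟩ := exists_matN_bound htc hA
  refine MemLp.of_le_mul (c := C) hy (aesm_mulVecE ht hA hy.aestronglyMeasurable) ?_
  filter_upwards [ae_restrict_mem ht] with s hs
  calc ‖mulVecE (A s) (y s)‖ ≤ matN (A s) * ‖y s‖ := norm_mulVecE_le _ _
  _ ≤ C * ‖y s‖ := mul_le_mul_of_nonneg_right (hC s hs) (norm_nonneg _)

lemma integrable_inner_of_memL2 {E : Type*} [NormedAddCommGroup E] [InnerProductSpace ℝ E]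
    {α : Type*} [MeasurableSpace α] {μ : Measure α} {f g : α → E}
    (hf : MemLp f 2 μ) (hg : MemLp g 2 μ) : Integrable (fun x => ⟪f x, g x⟫) μ := by
  have h := L2.integrable_inner (𝕜 := ℝ) (hf.toLp f) (hg.toLp g)
  refine h.congr ?_
  filter_upwards [hf.coeFn_toLp, hg.coeFn_toLp] with x h1 h2
  rw [h1, h2]

lemma tri {a b : ℝ} (k : ℝ → ℝ → ℝ)
    (hk : Integrable (Function.uncurry k)
      ((volume.restrict (Icc a b)).prod (volume.restrict (Icc a b)))) :
    Integrable (fun s => ∫ θ in Icc a s, k s θ) (volume.restrict (Icc a b)) ∧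
    Integrable (fun t => ∫ s in Icc t b, k s t) (volume.restrict (Icc a b)) ∧
    ∫ s in Icc a b, ∫ θ in Icc a s, k s θ = ∫ t in Icc a b, ∫ s in Icc t b, k s t := by
  set μ := volume.restrict (Icc a b) with hμ
  have hT : MeasurableSet {z : ℝ × ℝ | z.2 ≤ z.1} :=
    measurableSet_le measurable_snd measurable_fst
  set F : ℝ × ℝ → ℝ := ({z : ℝ × ℝ | z.2 ≤ z.1}).indicator (Function.uncurry k) with hFdef
  have hF : Integrable F (μ.prod μ) := hk.indicator hT
  have h1 : ∀ s ∈ Icc a b, ∫ θ, F (s, θ) ∂μ = ∫ θ in Icc a s, k s θ := by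
    intro s hs
    have he : (fun θ => F (s, θ)) = (Iic s).indicator (fun θ => k s θ) := by
      ext θ
      by_cases h : θ ≤ s <;> simp [hFdef, Function.uncurry, indicator, h]
    have hset : Iic s ∩ Icc a b = Icc a s := by
      ext θ
      simp only [mem_inter_iff, mem_Iic, mem_Icc]
      exact ⟨fun ⟨h1, h2, _⟩ => ⟨h2, h1⟩, fun ⟨h1, h2⟩ => ⟨h2, h1, h2.trans hs.2⟩⟩
    rw [he, integral_indicator measurableSet_Iic, hμ,
      Measure.restrict_restrict measurableSet_Iic, hset]
  have h2 : ∀ t ∈ Icc a b, ∫ s, F (s, t) ∂μ = ∫ s in Icc t b, k s t := by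
    intro t ht
    have he : (fun s => F (s, t)) = (Ici t).indicator (fun s => k s t) := by
      ext s
      by_cases h : t ≤ s <;> simp [hFdef, Function.uncurry, indicator, h]
    have hset : Ici t ∩ Icc a b = Icc t b := by
      ext s
      simp only [mem_inter_iff, mem_Ici, mem_Icc]
      exact ⟨fun ⟨h1, _, h3⟩ => ⟨h1, h3⟩, fun ⟨h1, h2⟩ => ⟨h1, ht.1.trans h1, h2⟩⟩
    rw [he, integral_indicator measurableSet_Ici, hμ,
      Measure.restrict_restrict measurableSet_Ici, hset]
  have hae1 : (fun s => ∫ θ, F (s, θ) ∂μ) =ᵐ[μ] fun s => ∫ θ in Icc a s, k s θ :=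
    Filter.eventually_of_mem (self_mem_ae_restrict measurableSet_Icc) h1
  have hae2 : (fun t => ∫ s, F (s, t) ∂μ) =ᵐ[μ] fun t => ∫ s in Icc t b, k s t :=
    Filter.eventually_of_mem (self_mem_ae_restrict measurableSet_Icc) h2
  refine ⟨hF.integral_prod_left.congr hae1, hF.integral_prod_right.congr hae2, ?_⟩
  calc ∫ s in Icc a b, ∫ θ in Icc a s, k s θ
      = ∫ s, (∫ θ, F (s, θ) ∂μ) ∂μ := (integral_congr_ae hae1).symm
    _ = ∫ θ, (∫ s, F (s, θ) ∂μ) ∂μ :=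
        integral_integral_swap (f := fun s θ => F (s, θ)) hF
    _ = ∫ t in Icc a b, ∫ s in Icc t b, k s t := integral_congr_ae hae2

lemma finiteIcc {a b : ℝ} : IsFiniteMeasure (volume.restrict (Icc a b)) :=
  ⟨by rw [Measure.restrict_apply_univ]; simp [Real.volume_Icc]⟩

lemma integrable_of_memL2 {E : Type*} [NormedAddCommGroup E] {a b : ℝ}
    {y : ℝ → E} (hy : MemLp y 2 (volume.restrict (Icc a b))) :
    Integrable y (volume.restrict (Icc a b)) := by
  haveI := finiteIcc (a := a) (b := b)
  exact memLp_one_iff_integrable.mp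
    (hy.mono_exponent (by norm_num))

set_option maxHeartbeats 1000000 in
lemma integrable_kernel {q n : ℕ} {a b : ℝ}
    (R : ℝ → ℝ → Matrix (Fin q) (Fin n) ℝ)
    (hR : ContinuousOn (fun z : ℝ × ℝ => R z.1 z.2) (Icc a b ×ˢ Icc a b))
    {y₁ : ℝ → EuclideanSpace ℝ (Fin n)} {y₂ : ℝ → EuclideanSpace ℝ (Fin q)}
    (hy₁ : MemLp y₁ 2 (volume.restrict (Icc a b)))
    (hy₂ : MemLp y₂ 2 (volume.restrict (Icc a b))) :
    Integrable (fun z : ℝ × ℝ => ⟪mulVecE (R z.1 z.2) (y₁ z.2), y₂ z.1⟫)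
      ((volume.restrict (Icc a b)).prod (volume.restrict (Icc a b))) := by
  set μ := volume.restrict (Icc a b) with hμ
  have hprodmeas : MeasurableSet (Icc a b ×ˢ Icc a b : Set (ℝ × ℝ)) :=
    measurableSet_Icc.prod measurableSet_Icc
  have hprod : μ.prod μ = (volume.prod volume).restrict (Icc a b ×ˢ Icc a b) := by
    rw [hμ, Measure.prod_restrict]
  have hRm : AEStronglyMeasurable (fun z : ℝ × ℝ => R z.1 z.2) (μ.prod μ) := by
    rw [hprod]
    exact hR.aestronglyMeasurable hprodmeas
  have hy1m : AEStronglyMeasurable (fun z : ℝ × ℝ => y₁ z.2) (μ.prod μ) :=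
    hy₁.aestronglyMeasurable.comp_snd
  have hy2m : AEStronglyMeasurable (fun z : ℝ × ℝ => y₂ z.1) (μ.prod μ) :=
    hy₂.aestronglyMeasurable.comp_fst
  have hmv : AEStronglyMeasurable (fun z : ℝ × ℝ => mulVecE (R z.1 z.2) (y₁ z.2)) (μ.prod μ) := by
    have hp : AEStronglyMeasurable (fun z : ℝ × ℝ => (R z.1 z.2, y₁ z.2)) (μ.prod μ) :=
      hRm.prodMk hy1m
    exact continuous_mulVecE.comp_aestronglyMeasurable hp
  have hinner : AEStronglyMeasurable
      (fun z : ℝ × ℝ => ⟪mulVecE (R z.1 z.2) (y₁ z.2), y₂ z.1⟫) (μ.prod μ) :=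
    hmv.inner hy2m
  obtain ⟨C, hC0, hC⟩ := exists_matN_bound (isCompact_Icc.prod isCompact_Icc) hR
  have hy1i := integrable_of_memL2 hy₁
  have hy2i := integrable_of_memL2 hy₂
  have hbd : Integrable (fun z : ℝ × ℝ => C * (‖y₂ z.1‖ * ‖y₁ z.2‖)) (μ.prod μ) :=
    (hy2i.norm.mul_prod hy1i.norm).const_mul C
  refine hbd.mono' hinner ?_
  have hmem : ∀ᵐ z ∂(μ.prod μ), z ∈ (Icc a b ×ˢ Icc a b : Set (ℝ × ℝ)) := by
    rw [hprod]
    exact ae_restrict_mem hprodmeas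
  filter_upwards [hmem] with z hz
  calc ‖⟪mulVecE (R z.1 z.2) (y₁ z.2), y₂ z.1⟫‖
      ≤ ‖mulVecE (R z.1 z.2) (y₁ z.2)‖ * ‖y₂ z.1‖ := norm_inner_le_norm _ _
    _ ≤ (matN (R z.1 z.2) * ‖y₁ z.2‖) * ‖y₂ z.1‖ :=
        mul_le_mul_of_nonneg_right (norm_mulVecE_le _ _) (norm_nonneg _)
    _ ≤ (C * ‖y₁ z.2‖) * ‖y₂ z.1‖ := by
        have := hC z hz
        gcongr
    _ = C * (‖y₂ z.1‖ * ‖y₁ z.2‖) := by ring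

lemma continuous_transpose {q n : ℕ} :
    Continuous (fun M : Matrix (Fin q) (Fin n) ℝ => Mᵀ) := by
  apply continuous_pi; intro j; apply continuous_pi; intro i
  exact (continuous_apply j).comp (continuous_apply i)

lemma intervalIntegral_eq_Icc {E : Type*} [NormedAddCommGroup E] [NormedSpace ℝ E]
    {a b : ℝ} (hab : a ≤ b) (f : ℝ → E) : ∫ x in a..b, f x = ∫ x in Icc a b, f x := by
  rw [intervalIntegral.integral_of_le hab, integral_Icc_eq_integral_Ioc]

lemma inner_setIntegral_mulVecE_left {q n : ℕ} {t : Set ℝ} (ht : MeasurableSet t)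
    (htc : IsCompact t) {A : ℝ → Matrix (Fin q) (Fin n) ℝ} (hA : ContinuousOn A t)
    {y : ℝ → EuclideanSpace ℝ (Fin n)} (hy : Integrable y (volume.restrict t))
    (w : EuclideanSpace ℝ (Fin q)) :
    ⟪∫ θ in t, mulVecE (A θ) (y θ), w⟫ = ∫ θ in t, ⟪mulVecE (A θ) (y θ), w⟫ := by
  rw [real_inner_comm, ← integral_inner (integrable_mulVecE ht htc hA hy) w]
  exact integral_congr_ae (ae_of_all _ fun θ => real_inner_comm _ _)

lemma inner_setIntegral_mulVecE_right {q n : ℕ} {t : Set ℝ} (ht : MeasurableSet t)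
    (htc : IsCompact t) {A : ℝ → Matrix (Fin q) (Fin n) ℝ} (hA : ContinuousOn A t)
    {y : ℝ → EuclideanSpace ℝ (Fin n)} (hy : Integrable y (volume.restrict t))
    (w : EuclideanSpace ℝ (Fin q)) :
    ⟪w, ∫ θ in t, mulVecE (A θ) (y θ)⟫ = ∫ θ in t, ⟪w, mulVecE (A θ) (y θ)⟫ :=
  (integral_inner (integrable_mulVecE ht htc hA hy) w).symm

/-- The adjoint of a 4-PI operator with respect to the `ℝ × L²` inner product is the 4-PI
operator with parameters `P̂ = Pᵀ`, `Q̂₁(s) = Q₂(s)ᵀ`, `Q̂₂(s) = Q₁(s)ᵀ`, `R̂₀(s) = R₀(s)ᵀ`,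
`R̂₁(s,η) = R₂(η,s)ᵀ`, `R̂₂(s,η) = R₁(η,s)ᵀ`. -/
theorem fourPI_adjoint {p q n m : ℕ} {a b : ℝ} (hab : a < b)
    (P : Matrix (Fin p) (Fin m) ℝ)
    (Q₁ : ℝ → Matrix (Fin p) (Fin n) ℝ)
    (Q₂ : ℝ → Matrix (Fin q) (Fin m) ℝ)
    (R₀ : ℝ → Matrix (Fin q) (Fin n) ℝ)
    (R₁ R₂ : ℝ → ℝ → Matrix (Fin q) (Fin n) ℝ)
    (hQ₁ : ContinuousOn Q₁ (Icc a b))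
    (hQ₂ : ContinuousOn Q₂ (Icc a b))
    (hR₀ : ContinuousOn R₀ (Icc a b))
    (hR₁ : ContinuousOn (fun z : ℝ × ℝ => R₁ z.1 z.2) (Icc a b ×ˢ Icc a b))
    (hR₂ : ContinuousOn (fun z : ℝ × ℝ => R₂ z.1 z.2) (Icc a b ×ˢ Icc a b))
    (x₁ : EuclideanSpace ℝ (Fin m)) (y₁ : ℝ → EuclideanSpace ℝ (Fin n))
    (x₂ : EuclideanSpace ℝ (Fin p)) (y₂ : ℝ → EuclideanSpace ℝ (Fin q))
    (hy₁ : MemLp y₁ 2 (volume.restrict (Icc a b)))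
    (hy₂ : MemLp y₂ 2 (volume.restrict (Icc a b))) :
    ⟪fourPIfin a b P Q₁ x₁ y₁, x₂⟫
        + ∫ s in a..b, ⟪fourPIfun a b Q₂ R₀ R₁ R₂ x₁ y₁ s, y₂ s⟫
      = ⟪x₁, fourPIfin a b Pᵀ (fun s => (Q₂ s)ᵀ) x₂ y₂⟫
        + ∫ s in a..b, ⟪y₁ s, fourPIfun a b (fun s => (Q₁ s)ᵀ) (fun s => (R₀ s)ᵀ)
            (fun s η => (R₂ η s)ᵀ) (fun s η => (R₁ η s)ᵀ) x₂ y₂ s⟫ := by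
  have hab' : a ≤ b := hab.le
  have hmI : MeasurableSet (Icc a b) := measurableSet_Icc
  have hcI : IsCompact (Icc a b) := isCompact_Icc
  have hy1i := integrable_of_memL2 hy₁
  have hy2i := integrable_of_memL2 hy₂
  have hQ₁T : ContinuousOn (fun s => (Q₁ s)ᵀ) (Icc a b) :=
    continuous_transpose.comp_continuousOn hQ₁
  have hQ₂T : ContinuousOn (fun s => (Q₂ s)ᵀ) (Icc a b) :=
    continuous_transpose.comp_continuousOn hQ₂
  have hR₀T : ContinuousOn (fun s => (R₀ s)ᵀ) (Icc a b) :=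
    continuous_transpose.comp_continuousOn hR₀
  have hR₁row : ∀ s ∈ Icc a b, ContinuousOn (fun θ => R₁ s θ) (Icc a b) := fun s hs =>
    hR₁.comp ((continuous_const.prodMk continuous_id).continuousOn)
      (fun θ hθ => Set.mk_mem_prod hs hθ)
  have hR₂row : ∀ s ∈ Icc a b, ContinuousOn (fun θ => R₂ s θ) (Icc a b) := fun s hs =>
    hR₂.comp ((continuous_const.prodMk continuous_id).continuousOn)
      (fun θ hθ => Set.mk_mem_prod hs hθ)
  have hR₁colT : ∀ s ∈ Icc a b, ContinuousOn (fun η => (R₁ η s)ᵀ) (Icc a b) := fun s hs =>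
    continuous_transpose.comp_continuousOn
      (hR₁.comp ((continuous_id.prodMk continuous_const).continuousOn)
        (fun η hη => Set.mk_mem_prod hη hs))
  have hR₂colT : ∀ s ∈ Icc a b, ContinuousOn (fun η => (R₂ η s)ᵀ) (Icc a b) := fun s hs =>
    continuous_transpose.comp_continuousOn
      (hR₂.comp ((continuous_id.prodMk continuous_const).continuousOn)
        (fun η hη => Set.mk_mem_prod hη hs))
  have hsubL : ∀ s ∈ Icc a b, Icc a s ⊆ Icc a b := fun s hs => Icc_subset_Icc le_rfl hs.2
  have hsubR : ∀ s ∈ Icc a b, Icc s b ⊆ Icc a b := fun s hs => Icc_subset_Icc hs.1 le_rfl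
  have hy1r : ∀ {t : Set ℝ}, t ⊆ Icc a b → Integrable y₁ (volume.restrict t) := fun h =>
    hy1i.mono_measure (Measure.restrict_mono h le_rfl)
  have hy2r : ∀ {t : Set ℝ}, t ⊆ Icc a b → Integrable y₂ (volume.restrict t) := fun h =>
    hy2i.mono_measure (Measure.restrict_mono h le_rfl)
  -- scalar integrabilities
  have hg1 : Integrable (fun s => ⟪mulVecE (Q₂ s) x₁, y₂ s⟫) (volume.restrict (Icc a b)) :=
    integrable_inner_of_memL2 (memL2_mulVecE hmI hcI hQ₂
      (haveI := finiteIcc (a := a) (b := b); memLp_const x₁)) hy₂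
  have hg2 : Integrable (fun s => ⟪mulVecE (R₀ s) (y₁ s), y₂ s⟫) (volume.restrict (Icc a b)) :=
    integrable_inner_of_memL2 (memL2_mulVecE hmI hcI hR₀ hy₁) hy₂
  have hh1 : Integrable (fun s => ⟪y₁ s, mulVecE (Q₁ s)ᵀ x₂⟫) (volume.restrict (Icc a b)) :=
    integrable_inner_of_memL2 hy₁ (memL2_mulVecE hmI hcI hQ₁T
      (haveI := finiteIcc (a := a) (b := b); memLp_const x₂))
  have hh2 : Integrable (fun s => ⟪y₁ s, mulVecE (R₀ s)ᵀ (y₂ s)⟫) (volume.restrict (Icc a b)) :=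
    integrable_inner_of_memL2 hy₁ (memL2_mulVecE hmI hcI hR₀T hy₂)
  -- kernels
  have hk1 : Integrable (Function.uncurry fun s θ : ℝ => ⟪mulVecE (R₁ s θ) (y₁ θ), y₂ s⟫)
      ((volume.restrict (Icc a b)).prod (volume.restrict (Icc a b))) := by
    exact integrable_kernel R₁ hR₁ hy₁ hy₂
  have hk2' : Integrable (Function.uncurry fun s θ : ℝ => ⟪mulVecE (R₂ θ s) (y₁ s), y₂ θ⟫)
      ((volume.restrict (Icc a b)).prod (volume.restrict (Icc a b))) := by
    exact (integrable_kernel R₂ hR₂ hy₁ hy₂).swap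
  obtain ⟨t1a, t1b, t1e⟩ := tri (fun s θ : ℝ => ⟪mulVecE (R₁ s θ) (y₁ θ), y₂ s⟫) hk1
  obtain ⟨t2a, t2b, t2e⟩ := tri (fun s θ : ℝ => ⟪mulVecE (R₂ θ s) (y₁ s), y₂ θ⟫) hk2'
  -- LHS integrand decomposition
  have L : ∀ s ∈ Icc a b,
      ⟪fourPIfun a b Q₂ R₀ R₁ R₂ x₁ y₁ s, y₂ s⟫ =
        ⟪mulVecE (Q₂ s) x₁, y₂ s⟫ + ⟪mulVecE (R₀ s) (y₁ s), y₂ s⟫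
          + (∫ θ in Icc a s, ⟪mulVecE (R₁ s θ) (y₁ θ), y₂ s⟫)
          + ∫ θ in Icc s b, ⟪mulVecE (R₂ s θ) (y₁ θ), y₂ s⟫ := by
    intro s hs
    have e1 : (∫ θ in a..s, mulVecE (R₁ s θ) (y₁ θ))
        = ∫ θ in Icc a s, mulVecE (R₁ s θ) (y₁ θ) := intervalIntegral_eq_Icc hs.1 _
    have e2 : (∫ θ in s..b, mulVecE (R₂ s θ) (y₁ θ))
        = ∫ θ in Icc s b, mulVecE (R₂ s θ) (y₁ θ) := intervalIntegral_eq_Icc hs.2 _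
    have p1 : ⟪∫ θ in Icc a s, mulVecE (R₁ s θ) (y₁ θ), y₂ s⟫
        = ∫ θ in Icc a s, ⟪mulVecE (R₁ s θ) (y₁ θ), y₂ s⟫ :=
      inner_setIntegral_mulVecE_left measurableSet_Icc isCompact_Icc
        ((hR₁row s hs).mono (hsubL s hs)) (hy1r (hsubL s hs)) _
    have p2 : ⟪∫ θ in Icc s b, mulVecE (R₂ s θ) (y₁ θ), y₂ s⟫
        = ∫ θ in Icc s b, ⟪mulVecE (R₂ s θ) (y₁ θ), y₂ s⟫ :=
      inner_setIntegral_mulVecE_left measurableSet_Icc isCompact_Icc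
        ((hR₂row s hs).mono (hsubR s hs)) (hy1r (hsubR s hs)) _
    simp only [fourPIfun, threePI, inner_add_left, e1, e2, p1, p2]
    ring
  -- RHS integrand decomposition
  have Rr : ∀ s ∈ Icc a b,
      ⟪y₁ s, fourPIfun a b (fun s => (Q₁ s)ᵀ) (fun s => (R₀ s)ᵀ)
          (fun s η => (R₂ η s)ᵀ) (fun s η => (R₁ η s)ᵀ) x₂ y₂ s⟫ =
        ⟪y₁ s, mulVecE (Q₁ s)ᵀ x₂⟫ + ⟪y₁ s, mulVecE (R₀ s)ᵀ (y₂ s)⟫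
          + (∫ θ in Icc a s, ⟪mulVecE (R₂ θ s) (y₁ s), y₂ θ⟫)
          + ∫ θ in Icc s b, ⟪mulVecE (R₁ θ s) (y₁ s), y₂ θ⟫ := by
    intro s hs
    have e1 : (∫ η in a..s, mulVecE (R₂ η s)ᵀ (y₂ η))
        = ∫ η in Icc a s, mulVecE (R₂ η s)ᵀ (y₂ η) := intervalIntegral_eq_Icc hs.1 _
    have e2 : (∫ η in s..b, mulVecE (R₁ η s)ᵀ (y₂ η))
        = ∫ η in Icc s b, mulVecE (R₁ η s)ᵀ (y₂ η) := intervalIntegral_eq_Icc hs.2 _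
    have p1 : ⟪y₁ s, ∫ η in Icc a s, mulVecE (R₂ η s)ᵀ (y₂ η)⟫
        = ∫ η in Icc a s, ⟪y₁ s, mulVecE (R₂ η s)ᵀ (y₂ η)⟫ :=
      inner_setIntegral_mulVecE_right measurableSet_Icc isCompact_Icc
        ((hR₂colT s hs).mono (hsubL s hs)) (hy2r (hsubL s hs)) _
    have p2 : ⟪y₁ s, ∫ η in Icc s b, mulVecE (R₁ η s)ᵀ (y₂ η)⟫
        = ∫ η in Icc s b, ⟪y₁ s, mulVecE (R₁ η s)ᵀ (y₂ η)⟫ :=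
      inner_setIntegral_mulVecE_right measurableSet_Icc isCompact_Icc
        ((hR₁colT s hs).mono (hsubR s hs)) (hy2r (hsubR s hs)) _
    have q1 : ∀ η : ℝ, ⟪y₁ s, mulVecE (R₂ η s)ᵀ (y₂ η)⟫ = ⟪mulVecE (R₂ η s) (y₁ s), y₂ η⟫ :=
      fun η => (inner_mulVecE _ _ _).symm
    have q2 : ∀ η : ℝ, ⟪y₁ s, mulVecE (R₁ η s)ᵀ (y₂ η)⟫ = ⟪mulVecE (R₁ η s) (y₁ s), y₂ η⟫ :=
      fun η => (inner_mulVecE _ _ _).symm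
    simp only [fourPIfun, threePI, inner_add_right, e1, e2, p1, p2, q1, q2]
    ring
  -- expand both outer integrals
  have hLexp : (∫ s in Icc a b, ⟪fourPIfun a b Q₂ R₀ R₁ R₂ x₁ y₁ s, y₂ s⟫)
      = (∫ s in Icc a b, ⟪mulVecE (Q₂ s) x₁, y₂ s⟫)
        + (∫ s in Icc a b, ⟪mulVecE (R₀ s) (y₁ s), y₂ s⟫)
        + (∫ s in Icc a b, ∫ θ in Icc a s, ⟪mulVecE (R₁ s θ) (y₁ θ), y₂ s⟫)
        + ∫ s in Icc a b, ∫ θ in Icc s b, ⟪mulVecE (R₂ s θ) (y₁ θ), y₂ s⟫ := by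
    have hg12 : Integrable (fun s => ⟪mulVecE (Q₂ s) x₁, y₂ s⟫
        + ⟪mulVecE (R₀ s) (y₁ s), y₂ s⟫) (volume.restrict (Icc a b)) := hg1.add hg2
    have hg123 : Integrable (fun s => ⟪mulVecE (Q₂ s) x₁, y₂ s⟫
        + ⟪mulVecE (R₀ s) (y₁ s), y₂ s⟫
        + ∫ θ in Icc a s, ⟪mulVecE (R₁ s θ) (y₁ θ), y₂ s⟫) (volume.restrict (Icc a b)) :=
      hg12.add t1a
    rw [setIntegral_congr_fun hmI L, integral_add hg123 t2b, integral_add hg12 t1a,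
      integral_add hg1 hg2]
  have hRexp : (∫ s in Icc a b, ⟪y₁ s, fourPIfun a b (fun s => (Q₁ s)ᵀ) (fun s => (R₀ s)ᵀ)
          (fun s η => (R₂ η s)ᵀ) (fun s η => (R₁ η s)ᵀ) x₂ y₂ s⟫)
      = (∫ s in Icc a b, ⟪y₁ s, mulVecE (Q₁ s)ᵀ x₂⟫)
        + (∫ s in Icc a b, ⟪y₁ s, mulVecE (R₀ s)ᵀ (y₂ s)⟫)
        + (∫ s in Icc a b, ∫ θ in Icc a s, ⟪mulVecE (R₂ θ s) (y₁ s), y₂ θ⟫)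
        + ∫ s in Icc a b, ∫ θ in Icc s b, ⟪mulVecE (R₁ θ s) (y₁ s), y₂ θ⟫ := by
    have hh12 : Integrable (fun s => ⟪y₁ s, mulVecE (Q₁ s)ᵀ x₂⟫
        + ⟪y₁ s, mulVecE (R₀ s)ᵀ (y₂ s)⟫) (volume.restrict (Icc a b)) := hh1.add hh2
    have hh123 : Integrable (fun s => ⟪y₁ s, mulVecE (Q₁ s)ᵀ x₂⟫
        + ⟪y₁ s, mulVecE (R₀ s)ᵀ (y₂ s)⟫
        + ∫ θ in Icc a s, ⟪mulVecE (R₂ θ s) (y₁ s), y₂ θ⟫) (volume.restrict (Icc a b)) :=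
      hh12.add t2a
    rw [setIntegral_congr_fun hmI Rr, integral_add hh123 t1b, integral_add hh12 t2a,
      integral_add hh1 hh2]
  -- fin parts
  have hfin1 : ⟪fourPIfin a b P Q₁ x₁ y₁, x₂⟫
      = ⟪x₁, mulVecE Pᵀ x₂⟫ + ∫ s in Icc a b, ⟪y₁ s, mulVecE (Q₁ s)ᵀ x₂⟫ := by
    simp only [fourPIfin, inner_add_left, intervalIntegral_eq_Icc hab']
    rw [inner_mulVecE, inner_setIntegral_mulVecE_left hmI hcI hQ₁ hy1i]
    congr 1
    exact setIntegral_congr_fun hmI fun s _ => inner_mulVecE _ _ _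
  have hfin2 : ⟪x₁, fourPIfin a b Pᵀ (fun s => (Q₂ s)ᵀ) x₂ y₂⟫
      = ⟪x₁, mulVecE Pᵀ x₂⟫ + ∫ s in Icc a b, ⟪mulVecE (Q₂ s) x₁, y₂ s⟫ := by
    simp only [fourPIfin, inner_add_right, intervalIntegral_eq_Icc hab']
    rw [inner_setIntegral_mulVecE_right hmI hcI hQ₂T hy2i]
    congr 1
    exact setIntegral_congr_fun hmI fun s _ => (inner_mulVecE _ _ _).symm
  -- pointwise rewriting of the R₀ term
  have hmid : (∫ s in Icc a b, ⟪mulVecE (R₀ s) (y₁ s), y₂ s⟫)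
      = ∫ s in Icc a b, ⟪y₁ s, mulVecE (R₀ s)ᵀ (y₂ s)⟫ :=
    setIntegral_congr_fun hmI fun s _ => inner_mulVecE _ _ _
  rw [intervalIntegral_eq_Icc hab' (fun s => ⟪fourPIfun a b Q₂ R₀ R₁ R₂ x₁ y₁ s, y₂ s⟫),
    intervalIntegral_eq_Icc hab' (fun s => ⟪y₁ s, fourPIfun a b (fun s => (Q₁ s)ᵀ)
      (fun s => (R₀ s)ᵀ) (fun s η => (R₂ η s)ᵀ) (fun s η => (R₁ η s)ᵀ) x₂ y₂ s⟫),
    hLexp, hRexp, hfin1, hfin2, hmid]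
  linarith [t1e, t2e]
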